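/- Let m be even, λ < 0 real, B = J_n(λ) ⊕ J_n(λ) and H = Q_n ⊕ (−Q_n). Then there exists an H-selfadjoint matrix A (i.e., HA = A*H) with A^m = B. -/

import Mathlib

open Matrix

def jordanBlock (n : ℕ) (lam : ℂ) : Matrix (Fin n) (Fin n) ℂ :=
  fun i j => if (i : ℕ) = (j : ℕ) then lam else if (i : ℕ) + 1 = (j : ℕ) then 1 else 0

def backQ (n : ℕ) : Matrix (Fin n) (Fin n) ℂ :=
  fun i j => if (i : ℕ) + (j : ℕ) + 1 = n then 1 else 0

def dsum {n : ℕ} (A B : Matrix (Fin n) (Fin n) ℂ) :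
    Matrix (Fin (n + n)) (Fin (n + n)) ℂ :=
  Matrix.reindex finSumFinEquiv finSumFinEquiv (Matrix.fromBlocks A 0 0 B)

open Polynomial Real

section helpers
variable {n : ℕ}

-- binomial-style expansion
lemma pow_succ_expand {R : Type*} [CommRing R] (a b : R) (k : ℕ) :
    ∃ s, (a + b) ^ (k + 1) = a ^ (k + 1) + (k + 1 : ℕ) • (a ^ k * b) + b ^ 2 * s := by
  induction k with
  | zero => exact ⟨0, by push_cast [nsmul_eq_mul]; ring⟩
  | succ k ih =>
    obtain ⟨s, hs⟩ := ih
    refine ⟨a * s + (k + 1 : ℕ) • a ^ k + b * s, ?_⟩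
    have : (a + b) ^ (k + 1 + 1) = (a + b) ^ (k + 1) * (a + b) := by ring
    rw [this, hs]
    push_cast [nsmul_eq_mul]
    ring

lemma hensel_step (m : ℕ) (hm : 0 < m) (a : ℝ) (ha : a ≠ 0) (lam : ℝ)
    (hma : a ^ m = -lam) :
    ∀ t : ℕ, 0 < t → ∃ q : ℝ[X], q.coeff 0 = a ∧ X ^ t ∣ q ^ m - (C (-lam) - X) := by
  intro t ht
  induction t with
  | zero => omega
  | succ t ih =>
    rcases Nat.eq_zero_or_pos t with rfl | htpos
    · refine ⟨C a, by simp, ?_⟩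
      have : (C a) ^ m - (C (-lam) - X) = X := by
        rw [← C_pow, hma]; ring
      rw [this]; simp
    obtain ⟨q, hq0, g, hg⟩ := ih htpos
    obtain ⟨k, rfl⟩ : ∃ k, m = k + 1 := ⟨m - 1, by omega⟩
    set c : ℝ := -g.coeff 0 / ((k + 1 : ℝ) * a ^ k) with hc
    obtain ⟨s, hs⟩ := pow_succ_expand q (C c * X ^ t) k
    refine ⟨q + C c * X ^ t, by simp [hq0]; intro h; omega, ?_⟩
    have key : (q + C c * X ^ t) ^ (k + 1) - (C (-lam) - X)
        = X ^ t * (g + (k + 1 : ℕ) • (q ^ k * C c))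
          + (C c * X ^ t) ^ 2 * s := by
      rw [hs]
      have h1 : q ^ (k + 1) - (C (-lam) - X) = X ^ t * g := hg
      have : q ^ (k + 1) = X ^ t * g + (C (-lam) - X) := by linear_combination h1
      rw [this]
      simp only [smul_mul_assoc, mul_smul_comm, nsmul_eq_mul]
      ring
    rw [key]
    apply dvd_add
    · -- X^(t+1) ∣ X^t * (g + (k+1) • (q^k * C c))
      have hcoeff : (g + (k + 1 : ℕ) • (q ^ k * C c)).coeff 0 = 0 := by
        have h1 : (q ^ k).coeff 0 = a ^ k := by
          have := map_pow (constantCoeff : ℝ[X] →+* ℝ) q k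
          simpa [constantCoeff_apply, hq0] using this
        have h2 : ((q ^ k * C c)).coeff 0 = a ^ k * c := by
          rw [mul_coeff_zero, h1, coeff_C_zero]
        simp only [coeff_add, coeff_smul, h2, smul_eq_mul]
        rw [hc]
        have hak : ((k:ℝ) + 1) * a ^ k ≠ 0 := by
          apply mul_ne_zero _ (pow_ne_zero _ ha)
          positivity
        field_simp
        have hk1 : (1 + (k:ℝ)) ≠ 0 := by positivity
        linear_combination (-g.coeff 0) * mul_inv_cancel₀ hk1
      obtain ⟨g', hg'⟩ := X_dvd_iff.mpr hcoeff
      rw [hg', pow_succ]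
      exact ⟨g', by ring⟩
    · -- X^(t+1) ∣ (C c * X^t)^2 * s
      refine Dvd.dvd.mul_right ?_ s
      have : (C c * X ^ t) ^ 2 = C c ^ 2 * X ^ (2 * t) := by ring
      rw [this]
      exact Dvd.dvd.mul_left (pow_dvd_pow X (by omega)) _


/-- real nilpotent superdiagonal matrix -/
def Nr (n : ℕ) : Matrix (Fin n) (Fin n) ℝ :=
  fun i j => if (i : ℕ) + 1 = (j : ℕ) then 1 else 0

/-- real backward identity -/
def Qr (n : ℕ) : Matrix (Fin n) (Fin n) ℝ :=
  fun i j => if (i : ℕ) + (j : ℕ) + 1 = n then 1 else 0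

lemma Qr_mul (M : Matrix (Fin n) (Fin n) ℝ) :
    Qr n * M = fun i j => M i.rev j := by
  ext i j
  rw [mul_apply, Finset.sum_eq_single i.rev]
  · have h : (i : ℕ) + (i.rev : ℕ) + 1 = n := by
      have := i.isLt; rw [Fin.val_rev]; omega
    simp only [Qr]; rw [if_pos h, one_mul]
  · intro b _ hb
    have hbv : (b : ℕ) ≠ (i.rev : ℕ) := fun h => hb (Fin.ext h)
    have : ¬ ((i : ℕ) + (b : ℕ) + 1 = n) := by
      have := i.isLt; have := b.isLt; simp [Fin.val_rev] at hbv ⊢; omega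
    simp [Qr, this]
  · simp

lemma mul_Qr (M : Matrix (Fin n) (Fin n) ℝ) :
    M * Qr n = fun i j => M i j.rev := by
  ext i j
  rw [mul_apply, Finset.sum_eq_single j.rev]
  · have h : (j.rev : ℕ) + (j : ℕ) + 1 = n := by
      have := j.isLt; rw [Fin.val_rev]; omega
    simp only [Qr]; rw [if_pos h, mul_one]
  · intro b _ hb
    have hbv : (b : ℕ) ≠ (j.rev : ℕ) := fun h => hb (Fin.ext h)
    have : ¬ ((b : ℕ) + (j : ℕ) + 1 = n) := by
      have := j.isLt; have := b.isLt; simp [Fin.val_rev] at hbv ⊢; omega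
    simp [Qr, this]
  · simp

lemma Qr_sq : Qr n * Qr n = 1 := by
  rw [Qr_mul]
  ext i j
  by_cases h : i = j
  · subst h
    have h1 : (i.rev : ℕ) + (i : ℕ) + 1 = n := by
      have := i.isLt; rw [Fin.val_rev]; omega
    simp only [Qr]; rw [if_pos h1, one_apply_eq]
  · have hv : (i : ℕ) ≠ (j : ℕ) := fun hh => h (Fin.ext hh)
    have h1 : ¬ ((i.rev : ℕ) + (j : ℕ) + 1 = n) := by
      have := i.isLt; have := j.isLt; rw [Fin.val_rev]; omega
    simp only [Qr]; rw [if_neg h1, one_apply_ne h]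

lemma Qr_Nr : Qr n * Nr n = (Nr n)ᵀ * Qr n := by
  rw [Qr_mul, mul_Qr]
  ext i j
  have hi := i.isLt; have hj := j.isLt
  simp only [Nr, transpose_apply, Fin.val_rev]
  by_cases h : n - (i+1) + 1 = (j : ℕ)
  · rw [if_pos h, if_pos (by omega)]
  · rw [if_neg h, if_neg (by omega)]

lemma Qr_pow_Nr (j : ℕ) : Qr n * (Nr n) ^ j = ((Nr n) ^ j)ᵀ * Qr n := by
  induction j with
  | zero => simp
  | succ j ih =>
    have : (Nr n) ^ (j + 1) = (Nr n) ^ j * Nr n := pow_succ _ _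
    rw [this, ← mul_assoc, ih, mul_assoc, Qr_Nr, ← mul_assoc, ← transpose_mul, ← pow_succ',
      ← pow_succ]

lemma Qr_aeval (q : ℝ[X]) : Qr n * aeval (Nr n) q = (aeval (Nr n) q)ᵀ * Qr n := by
  rw [aeval_eq_sum_range]
  rw [Finset.mul_sum]
  rw [transpose_sum, Finset.sum_mul]
  congr 1; ext j
  rw [mul_smul_comm, Qr_pow_Nr, transpose_smul, smul_mul_assoc]

lemma Nr_pow_eq_zero_of_lt : ∀ (k : ℕ) (i j : Fin n), (j : ℕ) < (i : ℕ) + k → ((Nr n) ^ k) i j = 0 := by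
  intro k
  induction k with
  | zero =>
    intro i j h
    simp only [pow_zero]
    exact one_apply_ne (fun e => by subst e; omega)
  | succ k ih =>
    intro i j h
    rw [pow_succ', mul_apply]
    apply Finset.sum_eq_zero
    intro l _
    by_cases hl : (i : ℕ) + 1 = (l : ℕ)
    · rw [ih l j (by omega), mul_zero]
    · simp [Nr, hl]

lemma Nr_pow_n : (Nr n) ^ n = 0 := by
  ext i j
  rw [Nr_pow_eq_zero_of_lt n i j (by have := j.isLt; omega)]
  simp


noncomputable def Mrot (n : ℕ) (x : ℝ) : Matrix (Fin n ⊕ Fin n) (Fin n ⊕ Fin n) ℝ :=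
  fromBlocks (Real.cos x • 1) (-(Real.sin x • 1)) (Real.sin x • 1) (Real.cos x • 1)

lemma Mrot_mul (x y : ℝ) : Mrot n x * Mrot n y = Mrot n (x + y) := by
  simp only [Mrot, fromBlocks_multiply]
  ext i j
  rcases i with i | i <;> rcases j with j | j <;>
      simp [fromBlocks, one_apply, Real.cos_add, Real.sin_add, Matrix.add_apply,
        Matrix.neg_apply, Matrix.smul_apply, Matrix.mul_apply, smul_eq_mul] <;>
    split_ifs <;> ring

lemma Mrot_zero : Mrot n 0 = 1 := by
  simp [Mrot, fromBlocks_one]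

lemma Mrot_pow (x : ℝ) (k : ℕ) : (Mrot n x) ^ k = Mrot n (k * x) := by
  induction k with
  | zero => simpa using Mrot_zero.symm
  | succ k ih =>
    rw [pow_succ, ih, Mrot_mul]
    congr 1
    push_cast
    ring

end helpers

theorem exists_H_selfadjoint_even_root_paired_blocks (n m : ℕ) (hm : 0 < m)
    (hme : Even m) (lam : ℝ) (hlam : lam < 0) :
    ∃ A : Matrix (Fin (n + n)) (Fin (n + n)) ℂ,
      dsum (backQ n) (-(backQ n)) * A = Aᴴ * dsum (backQ n) (-(backQ n)) ∧
      A ^ m = dsum (jordanBlock n (lam : ℂ)) (jordanBlock n (lam : ℂ)) := by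
  rcases Nat.eq_zero_or_pos n with rfl | hn
  · exact ⟨0, by ext i j; exact i.elim0, by ext i j; exact i.elim0⟩
  -- real m-th root of -lam
  set a : ℝ := (-lam) ^ ((m : ℝ)⁻¹) with ha_def
  have hlam' : (0:ℝ) < -lam := by linarith
  have hapos : 0 < a := Real.rpow_pos_of_pos hlam' _
  have ham : a ^ m = -lam := by
    rw [ha_def, ← Real.rpow_natCast ((-lam) ^ ((m:ℝ)⁻¹)) m, ← Real.rpow_mul hlam'.le]
    rw [inv_mul_cancel₀ (by exact_mod_cast hm.ne'), Real.rpow_one]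
  obtain ⟨q, hq0, g, hg⟩ := hensel_step m hm a hapos.ne' lam ham n hn
  -- the real root R of -(Jordan block)
  set R : Matrix (Fin n) (Fin n) ℝ := Polynomial.aeval (Nr n) q with hRdef
  set Jr : Matrix (Fin n) (Fin n) ℝ := lam • 1 + Nr n with hJr
  have hRm : R ^ m = -Jr := by
    have := congrArg (Polynomial.aeval (Nr n)) hg
    simp only [map_sub, _root_.map_pow, _root_.map_mul, Polynomial.aeval_X, Polynomial.aeval_C,
      Algebra.algebraMap_eq_smul_one, Nr_pow_n, zero_mul] at this
    rw [hJr]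
    have h2 : R ^ m - ((-lam) • 1 - Nr n) = 0 := this
    have h3 : R ^ m = (-lam) • 1 - Nr n := by
      rw [← sub_eq_zero]; exact h2
    rw [h3, neg_smul, neg_add]
    abel
  have hQR : Qr n * R = Rᵀ * Qr n := Qr_aeval q
  -- the rotation-tensor construction
  set θ : ℝ := Real.pi / m with hθ
  set Dr : Matrix (Fin n ⊕ Fin n) (Fin n ⊕ Fin n) ℝ := fromBlocks R 0 0 R with hDr
  have hDpow : ∀ k : ℕ, Dr ^ k = fromBlocks (R ^ k) 0 0 (R ^ k) := by
    intro k
    induction k with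
    | zero => simp [fromBlocks_one]
    | succ k ih => rw [pow_succ, ih, hDr, fromBlocks_multiply]; simp [pow_succ]
  have hcomm : Commute (Mrot n θ) Dr := by
    unfold Commute SemiconjBy
    simp [Mrot, hDr, fromBlocks_multiply, Matrix.smul_mul, Matrix.mul_smul]
  set Ar : Matrix (Fin n ⊕ Fin n) (Fin n ⊕ Fin n) ℝ := Mrot n θ * Dr with hAr
  have hArblocks : Ar = fromBlocks (Real.cos θ • R) (-(Real.sin θ • R))
      (Real.sin θ • R) (Real.cos θ • R) := by
    rw [hAr, hDr, Mrot, fromBlocks_multiply]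
    simp [Matrix.smul_mul, Matrix.mul_smul]
  -- A^m = J ⊕ J over ℝ
  have hmθ : (m : ℝ) * θ = Real.pi := by
    rw [hθ]; field_simp
  have hMrotpi : Mrot n (Real.pi) = -1 := by
    have h1 : (-1 : Matrix (Fin n ⊕ Fin n) (Fin n ⊕ Fin n) ℝ)
        = fromBlocks (-1) 0 0 (-1) := by
      rw [← fromBlocks_one]
      ext i j
      rcases i with i | i <;> rcases j with j | j <;> simp [fromBlocks]
    rw [h1, Mrot]
    simp
  have hA2 : Ar ^ m = fromBlocks Jr 0 0 Jr := by
    rw [hAr, hcomm.mul_pow, Mrot_pow, hmθ, hMrotpi, hDpow, hRm, neg_one_mul]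
    ext i j
    rcases i with i | i <;> rcases j with j | j <;> simp [fromBlocks]
  -- H-selfadjointness over ℝ
  set Hr : Matrix (Fin n ⊕ Fin n) (Fin n ⊕ Fin n) ℝ := fromBlocks (Qr n) 0 0 (-(Qr n)) with hHr
  have hA1 : Hr * Ar = Arᵀ * Hr := by
    rw [hArblocks, hHr, fromBlocks_transpose, fromBlocks_multiply, fromBlocks_multiply]
    simp only [transpose_smul, transpose_neg, Matrix.smul_mul, Matrix.mul_smul,
      Matrix.neg_mul, Matrix.mul_neg, smul_neg, neg_neg, hQR, add_zero, zero_add,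
      Matrix.zero_mul, Matrix.mul_zero, neg_zero, smul_zero]
  -- move to ℂ
  set φ : Matrix (Fin n ⊕ Fin n) (Fin n ⊕ Fin n) ℝ →+* Matrix (Fin n ⊕ Fin n) (Fin n ⊕ Fin n) ℂ :=
    (algebraMap ℝ ℂ).mapMatrix with hφ
  set ψ := Matrix.reindexAlgEquiv ℂ ℂ (finSumFinEquiv (m := n) (n := n)) with hψ
  have hφapp : ∀ M : Matrix (Fin n ⊕ Fin n) (Fin n ⊕ Fin n) ℝ,
      φ M = M.map (algebraMap ℝ ℂ) := fun _ => rfl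
  have hψapp : ∀ M : Matrix (Fin n ⊕ Fin n) (Fin n ⊕ Fin n) ℂ,
      ψ M = Matrix.reindex finSumFinEquiv finSumFinEquiv M := fun _ => rfl
  have hφct : ∀ M : Matrix (Fin n ⊕ Fin n) (Fin n ⊕ Fin n) ℝ, (φ M)ᴴ = φ (Mᵀ) := by
    intro M
    ext i j
    simp [hφapp, conjTranspose_apply, Matrix.map_apply, Complex.conj_ofReal]
  have hψct : ∀ M : Matrix (Fin n ⊕ Fin n) (Fin n ⊕ Fin n) ℂ, (ψ M)ᴴ = ψ (Mᴴ) := by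
    intro M
    simp [hψapp, reindex_apply, conjTranspose_submatrix]
  refine ⟨ψ (φ Ar), ?_, ?_⟩
  · have hH : dsum (backQ n) (-(backQ n)) = ψ (φ Hr) := by
      unfold dsum
      rw [hψapp, hφapp]
      congr 1
      ext i j
      rcases i with i | i <;> rcases j with j | j <;>
        simp [fromBlocks, backQ, Qr, hHr, Matrix.map_apply, apply_ite]
    rw [hH, hψct, hφct, ← _root_.map_mul ψ, ← _root_.map_mul φ, ← _root_.map_mul ψ,
      ← _root_.map_mul φ, hA1]
  · have hJ : dsum (jordanBlock n (lam : ℂ)) (jordanBlock n (lam : ℂ)) = ψ (φ (fromBlocks Jr 0 0 Jr)) := by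
      unfold dsum
      rw [hψapp, hφapp]
      congr 1
      have hone : jordanBlock n (lam : ℂ) = Jr.map (algebraMap ℝ ℂ) := by
        ext i j
        simp only [jordanBlock, hJr, Matrix.map_apply, Matrix.add_apply, Matrix.smul_apply,
          Matrix.one_apply, Nr, smul_eq_mul]
        by_cases h : (i : ℕ) = (j : ℕ)
        · have : i = j := Fin.ext h
          subst this
          simp
        · have hij : i ≠ j := fun hh => h (by rw [hh])
          rw [if_neg h, if_neg hij]
          simp
      ext i j
      rcases i with i | i <;> rcases j with j | j <;>
        simp [fromBlocks, hone, Matrix.map_apply]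
    rw [hJ, ← _root_.map_pow ψ, ← _root_.map_pow φ, hA2]
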